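/- Suppose x ∈ W(A) and the sequence (a_i) in A satisfy x = Σ_{i=0}^∞ s_φ(a_i)·V^i(1). Then V(x) = Σ_{i=1}^∞ s_φ(φ^{−1}(a_{i−1}))·V^i(1); that is, the sequence (b_i) defined by b_0 = 0 and b_i = φ^{−1}(a_{i−1}) for i ≥ 1 satisfies V(x) = Σ_{i=0}^∞ s_φ(b_i)·V^i(1). -/

import Mathlib

open WittVector

section Aux

variable {p : ℕ} [Fact p.Prime] {R : Type*} [CommRing R]

lemma ghostComponent_eq_sum (n : ℕ) (x : WittVector p R) :
    ghostComponent n x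
      = ∑ i ∈ Finset.range (n + 1), (p : R) ^ i * x.coeff i ^ p ^ (n - i) := by
  rw [ghostComponent_apply, wittPolynomial_eq_sum_C_mul_X_pow]
  simp [MvPolynomial.aeval_def, MvPolynomial.eval₂_sum, MvPolynomial.eval₂_mul,
    MvPolynomial.eval₂_pow, MvPolynomial.eval₂_C, MvPolynomial.eval₂_X]

lemma verschiebung_injective :
    Function.Injective (WittVector.verschiebung : WittVector p R →+ WittVector p R) := by
  intro x y h
  ext n
  have := congrArg (fun z => WittVector.coeff z (n + 1)) h
  simpa [verschiebung_coeff_succ] using this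

variable {k : Type*} [CommRing k] [CharP k p] [PerfectRing k p]

lemma p_mul_eq_zero {z : WittVector p k} (h : (p : WittVector p k) * z = 0) : z = 0 := by
  have h1 : WittVector.verschiebung (WittVector.frobenius z) = (0 : WittVector p k) := by
    rw [verschiebung_frobenius, mul_comm]
    exact h
  have h2 : WittVector.frobenius z = (0 : WittVector p k) := by
    apply _root_.verschiebung_injective
    simpa using h1
  have := (frobenius_bijective p k).injective
  apply this
  simpa using h2

lemma p_pow_mul_cancel (n : ℕ) {u v : WittVector p k}
    (h : (p : WittVector p k) ^ n * u = (p : WittVector p k) ^ n * v) : u = v := by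
  induction n with
  | zero => simpa using h
  | succ m ih =>
    apply ih
    have : (p : WittVector p k) * ((p : WittVector p k) ^ m * u - (p : WittVector p k) ^ m * v)
        = 0 := by ring_nf; ring_nf at h; rw [h]; ring
    have := p_mul_eq_zero this
    linear_combination this

lemma ghost_injective {x y : WittVector p (WittVector p k)}
    (h : ∀ n, ghostComponent n x = ghostComponent n y) : x = y := by
  have key : ∀ n, x.coeff n = y.coeff n := by
    intro n
    induction n using Nat.strong_induction_on with
    | _ n ih =>
      have hn := h n
      rw [ghostComponent_eq_sum, ghostComponent_eq_sum, Finset.sum_range_succ,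
        Finset.sum_range_succ] at hn
      have hsum : ∑ i ∈ Finset.range n, (p : WittVector p k) ^ i * x.coeff i ^ p ^ (n - i)
          = ∑ i ∈ Finset.range n, (p : WittVector p k) ^ i * y.coeff i ^ p ^ (n - i) := by
        apply Finset.sum_congr rfl
        intro i hi
        rw [ih i (Finset.mem_range.mp hi)]
      rw [hsum] at hn
      have h2 := add_left_cancel hn
      simp only [Nat.sub_self, pow_zero, pow_one] at h2
      exact p_pow_mul_cancel n h2
  exact WittVector.ext key

end Aux

/-- `x = Σ_{i=0}^∞ s(a_i)·V^i(1)` in `W(A)`: for every `n`, the difference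
`x − Σ_{i<n} s(a_i)·V^i(1)` lies in the image of `V^n`. -/
def IsVSeries (p : ℕ) [Fact p.Prime] {k : Type*} [CommRing k]
    (s : WittVector p k →+* WittVector p (WittVector p k))
    (x : WittVector p (WittVector p k)) (a : ℕ → WittVector p k) : Prop :=
  ∀ n : ℕ, ∃ y : WittVector p (WittVector p k),
    x - ∑ i ∈ Finset.range n, s (a i) * (⇑(WittVector.verschiebung))^[i] 1
      = (⇑(WittVector.verschiebung))^[n] y

section KeyLemma

variable {p : ℕ} [Fact p.Prime] {k : Type*} [CommRing k] [CharP k p] [PerfectRing k p]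

lemma frobenius_s_comm (s : WittVector p k →+* WittVector p (WittVector p k))
    (hs : ∀ (a : WittVector p k) (n : ℕ),
      WittVector.ghostComponent n (s a) = (⇑(WittVector.frobenius))^[n] a)
    (c : WittVector p k) :
    WittVector.frobenius (s c) = s (WittVector.frobenius c) := by
  apply ghost_injective
  intro n
  rw [ghostComponent_frobenius, hs, hs, ← Function.iterate_succ_apply]

end KeyLemma

theorem stmt_2 (p : ℕ) [Fact p.Prime] (hp : Odd p)
    (k : Type*) [CommRing k] [CharP k p] [PerfectRing k p]
    (s : WittVector p k →+* WittVector p (WittVector p k))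
    (hs : ∀ (a : WittVector p k) (n : ℕ),
      WittVector.ghostComponent n (s a) = (⇑(WittVector.frobenius))^[n] a)
    (x : WittVector p (WittVector p k)) (a : ℕ → WittVector p k)
    (hxa : IsVSeries p s x a)
    (b : ℕ → WittVector p k) (hb0 : b 0 = 0)
    (hb : ∀ i : ℕ, 1 ≤ i → b i = (WittVector.frobeniusEquiv p k).symm (a (i - 1))) :
    IsVSeries p s (WittVector.verschiebung x) b := by
  intro n
  cases n with
  | zero => exact ⟨WittVector.verschiebung x, by simp⟩
  | succ m =>
    obtain ⟨y, hy⟩ := hxa m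
    refine ⟨y, ?_⟩
    have hterm : ∀ i : ℕ, s (b (i + 1)) * (⇑(WittVector.verschiebung))^[i + 1] 1
        = WittVector.verschiebung (s (a i) * (⇑(WittVector.verschiebung))^[i] 1) := by
      intro i
      have hFb : WittVector.frobenius (b (i + 1)) = a i := by
        rw [hb (i + 1) (by omega)]
        simp only [Nat.add_sub_cancel]
        have := (frobeniusEquiv p k).apply_symm_apply (a i)
        rwa [WittVector.frobeniusEquiv_apply] at this
      rw [Function.iterate_succ_apply', mul_comm,
        ← verschiebung_mul_frobenius ((⇑(WittVector.verschiebung))^[i] 1) (s (b (i + 1))),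
        frobenius_s_comm s hs, hFb, mul_comm]
    have hsum : ∑ i ∈ Finset.range (m + 1), s (b i) * (⇑(WittVector.verschiebung))^[i] 1
        = WittVector.verschiebung
            (∑ i ∈ Finset.range m, s (a i) * (⇑(WittVector.verschiebung))^[i] 1) := by
      rw [Finset.sum_range_succ']
      simp only [hb0, map_zero, zero_mul, add_zero, hterm]
      rw [map_sum]
    rw [hsum, ← map_sub, hy]
    exact (Function.iterate_succ_apply' (⇑(WittVector.verschiebung)) m y).symm
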